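/- Let D = {x = (x₁,x₂,x₃) ∈ ℝ³ : x₁² − x₂²·(1 − x₃²) + x₃² − 1 > 0}. Then for every point p ∈ ℝ³ \ D there exists an affine line through p whose direction vector v satisfies v₃ = 0 and which is disjoint from D. In particular, D is convex relative to the family of affine lines in ℝ³ parallel to the plane {x : x₃ = 0}. -/

import Mathlib

/-- The unbounded smooth domain
`D = {x ∈ ℝ³ : x₁² − x₂²·(1 − x₃²) + x₃² − 1 > 0}`. -/
def Dcyl : Set (EuclideanSpace ℝ (Fin 3)) :=
  {x | x 0 ^ 2 - x 1 ^ 2 * (1 - x 2 ^ 2) + x 2 ^ 2 - 1 > 0}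

/-- Through every point of the complement of `Dcyl` there passes an affine line whose
direction `v` satisfies `v₃ = 0` (i.e., parallel to the plane `{x | x₃ = 0}`) and which
is disjoint from `Dcyl`; thus `Dcyl` is convex relative to the family of affine lines
parallel to `{x | x₃ = 0}`. -/
theorem cylinder_example_linearly_convex :
    ∀ p ∉ Dcyl, ∃ l : AffineSubspace ℝ (EuclideanSpace ℝ (Fin 3)),
      Module.finrank ℝ l.direction = 1 ∧ (∀ v ∈ l.direction, v 2 = 0) ∧
      p ∈ l ∧ (l : Set (EuclideanSpace ℝ (Fin 3))) ∩ Dcyl = ∅ := by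
  intro p hp
  simp only [Dcyl, Set.mem_setOf_eq, not_lt] at hp
  have hden : (0:ℝ) < 1 + (p 1)^2 := by positivity
  set s : ℝ := p 0 * p 1 / (1 + (p 1)^2) with hs
  set c : ℝ := p 0 / (1 + (p 1)^2) with hc
  have key : s^2 + c^2 ≤ 1 - (p 2)^2 := by
    rw [hs, hc, div_pow, div_pow, ← add_div, div_le_iff₀ (by positivity)]
    nlinarith [hp, sq_nonneg (p 1), hden]
  have hlin : p 0 = s * p 1 + c := by
    rw [hs, hc]; field_simp; ring
  set v : EuclideanSpace ℝ (Fin 3) := !₂[s, 1, 0] with hv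
  have hv1 : v 1 = 1 := rfl
  have hv2 : v 2 = 0 := rfl
  have hv0 : v 0 = s := rfl
  have hvne : v ≠ 0 := by
    intro h
    have : v 1 = 0 := by rw [h]; rfl
    rw [hv1] at this; norm_num at this
  refine ⟨AffineSubspace.mk' p (Submodule.span ℝ {v}), ?_, ?_, AffineSubspace.self_mem_mk' _ _, ?_⟩
  · rw [AffineSubspace.direction_mk']
    exact finrank_span_singleton hvne
  · intro w hw
    rw [AffineSubspace.direction_mk'] at hw
    obtain ⟨t, rfl⟩ := Submodule.mem_span_singleton.mp hw
    show t * v 2 = 0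
    rw [hv2, mul_zero]
  · rw [Set.eq_empty_iff_forall_notMem]
    rintro x ⟨hxl, hxD⟩
    rw [SetLike.mem_coe, AffineSubspace.mem_mk'] at hxl
    obtain ⟨t, ht⟩ := Submodule.mem_span_singleton.mp hxl
    have h0 : x 0 = p 0 + t * s := by
      have : t * v 0 = x 0 - p 0 := congrArg (· 0) ht
      rw [hv0] at this; linarith
    have h1 : x 1 = p 1 + t := by
      have : t * v 1 = x 1 - p 1 := congrArg (· 1) ht
      rw [hv1] at this; linarith
    have h2 : x 2 = p 2 := by
      have : t * v 2 = x 2 - p 2 := congrArg (· 2) ht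
      rw [hv2] at this; linarith
    have hx0 : x 0 = s * x 1 + c := by rw [h0, h1, hlin]; ring
    simp only [Dcyl, Set.mem_setOf_eq] at hxD
    rw [hx0, h2] at hxD
    nlinarith [sq_nonneg (s - c * x 1), sq_nonneg (x 1), key]
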